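/- arXiv:1212.2306 — 4 statements merged into one kernel-verified Lean document; each statement's English description precedes it below -/
import Mathlib

section
/- Let G be a connected simple graph and k a positive integer. Every k-isthmus I of G is contained in at least one k-block of G; in particular, no k-isthmus is an isolated vertex of the k-isthmus graph T_k. -/
/-- `I` is a `k`-isthmus of the induced subgraph `G[S]`: `I ⊆ S`, `I` carries a path
structure on `k` vertices (consecutive vertices adjacent in `G`), and `S \ I`
partitions into nonempty sets `X` and `Y` such that no path inside `G[S \ I]`
connects `X` to `Y` (every path from `X` to `Y` passes through `I`). -/
def IsKIsthmusOn {V : Type*} (G : SimpleGraph V) (S : Set V) (k : ℕ) (I : Set V) : Prop :=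
  I ⊆ S ∧
  (∃ l : List V, l.Nodup ∧ l.length = k ∧ {x | x ∈ l} = I ∧ l.Chain' G.Adj) ∧
  ∃ X Y : Set V, X.Nonempty ∧ Y.Nonempty ∧ Disjoint X Y ∧ X ∪ Y = S \ I ∧
    ∀ x y : ↥(S \ I), ↑x ∈ X → ↑y ∈ Y → ¬ (G.induce (S \ I)).Reachable x y

/-- `B` is a `k`-block of `G`: `G[B]` is connected, has no `k`-isthmus of itself,
and `B` is maximal with these two properties. -/
def IsKBlock {V : Type*} (G : SimpleGraph V) (k : ℕ) (B : Set V) : Prop :=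
  (G.induce B).Connected ∧ (∀ I, ¬ IsKIsthmusOn G B k I) ∧
  ∀ B' : Set V, B ⊆ B' → (G.induce B').Connected → (∀ I, ¬ IsKIsthmusOn G B' k I) → B' = B


/-- The `k`-isthmus graph of `G`: vertices are the `k`-blocks and the `k`-isthmuses
of `G`, a block `B` and an isthmus `I` being adjacent iff `I ⊆ B`. -/
def isthmusGraph {V : Type*} (G : SimpleGraph V) (k : ℕ) :
    SimpleGraph ({B : Set V // IsKBlock G k B} ⊕ {I : Set V // IsKIsthmusOn G Set.univ k I}) :=
  SimpleGraph.fromRel (fun u w =>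
    match u, w with
    | Sum.inl B, Sum.inr I => I.1 ⊆ B.1
    | Sum.inr I, Sum.inl B => I.1 ⊆ B.1
    | _, _ => False)

lemma chain_reach {V : Type*} (G : SimpleGraph V) (S : Set V) (a : V) (t : List V)
    (hc : List.Chain G.Adj a t) (ha : a ∈ S) (ht : ∀ x ∈ t, x ∈ S) :
    ∀ x (hx : x ∈ t), (G.induce S).Reachable ⟨a, ha⟩ ⟨x, ht x hx⟩ := by
  induction t generalizing a with
  | nil => intro x hx; simp at hx
  | cons b t' ih =>
    rcases List.chain_cons.mp hc with ⟨hab, hbt⟩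
    have hb : b ∈ S := ht b (List.mem_cons_self)
    have hr : (G.induce S).Reachable ⟨a, ha⟩ ⟨b, hb⟩ :=
      SimpleGraph.Adj.reachable (by exact hab)
    intro x hx
    rcases List.mem_cons.mp hx with rfl | hx'
    · exact hr
    · exact hr.trans (ih b hbt hb (fun y hy => ht y (List.mem_cons_of_mem _ hy)) x hx')

lemma chain_connected {V : Type*} (G : SimpleGraph V) (l : List V) (hl : l ≠ [])
    (hc : l.Chain' G.Adj) : (G.induce {x | x ∈ l}).Connected := by
  cases l with
  | nil => exact absurd rfl hl
  | cons a t =>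
    have ha : a ∈ {x | x ∈ a :: t} := by simp
    haveI : Nonempty ↥{x | x ∈ a :: t} := ⟨⟨a, ha⟩⟩
    refine SimpleGraph.Connected.mk ?_
    intro u v
    have key : ∀ w : ↥{x | x ∈ a :: t}, (G.induce {x | x ∈ a :: t}).Reachable ⟨a, ha⟩ w := by
      rintro ⟨w, hw⟩
      rcases List.mem_cons.mp hw with rfl | hw'
      · rfl
      · exact chain_reach G _ a t hc ha (fun y hy => by simp [hy]) w hw'
    exact (key u).symm.trans (key v)

/-- Every `k`-isthmus of `G` is contained in a `k`-block; in particular no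
`k`-isthmus is isolated in the `k`-isthmus graph. -/
theorem isthmus_in_block {V : Type*} [Fintype V]
    (G : SimpleGraph V) (hG : G.Connected) (k : ℕ) (hk : 0 < k) :
    (∀ I : Set V, IsKIsthmusOn G Set.univ k I → ∃ B : Set V, IsKBlock G k B ∧ I ⊆ B) ∧
    (∀ I : {I : Set V // IsKIsthmusOn G Set.univ k I},
      ∃ B : {B : Set V // IsKBlock G k B}, (isthmusGraph G k).Adj (Sum.inr I) (Sum.inl B)) := by
  classical
  have main : ∀ I : Set V, IsKIsthmusOn G Set.univ k I →
      ∃ B : Set V, IsKBlock G k B ∧ I ⊆ B := by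
    intro I hI
    obtain ⟨-, ⟨l, hnd, hlen, hset, hchain⟩, -⟩ := hI
    have hlne : l ≠ [] := by
      intro h; rw [h] at hlen; simp at hlen; omega
    have hIcard : I.ncard = k := by
      rw [← hset, ← List.coe_toFinset, Set.ncard_coe_finset,
        List.toFinset_card_of_nodup hnd, hlen]
    have hIconn : (G.induce I).Connected := hset ▸ chain_connected G l hlne hchain
    have hInoI : ∀ J, ¬ IsKIsthmusOn G I k J := by
      rintro J ⟨hJI, ⟨m, hmnd, hmlen, hmset, -⟩, X, Y, hX, hY, -, hXY, -⟩
      have hJcard : J.ncard = k := by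
        rw [← hmset, ← List.coe_toFinset, Set.ncard_coe_finset,
          List.toFinset_card_of_nodup hmnd, hmlen]
      have hJeq : J = I :=
        Set.eq_of_subset_of_ncard_le hJI (by rw [hIcard, hJcard]) (Set.toFinite I)
      obtain ⟨x, hx⟩ := hX
      have : x ∈ I \ J := (hXY ▸ (Set.subset_union_left)) hx
      rw [hJeq] at this
      exact this.2 this.1
    set s : Set (Set V) := {B | I ⊆ B ∧ (G.induce B).Connected ∧ ∀ J, ¬ IsKIsthmusOn G B k J}
      with hs
    have hsne : s.Nonempty := ⟨I, le_refl I, hIconn, hInoI⟩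
    obtain ⟨B, hBs, hBmax⟩ := Set.Finite.exists_maximalFor Set.ncard s (Set.toFinite s) hsne
    refine ⟨B, ⟨hBs.2.1, hBs.2.2, ?_⟩, hBs.1⟩
    intro B' hBB' hB'conn hB'noI
    have hB's : B' ∈ s := ⟨hBs.1.trans hBB', hB'conn, hB'noI⟩
    have hle : B.ncard ≤ B'.ncard := Set.ncard_le_ncard hBB' (Set.toFinite B')
    have heq := hBmax hB's hle
    exact (Set.eq_of_subset_of_ncard_le hBB' heq.ge (Set.toFinite B')).symm
  refine ⟨main, ?_⟩
  rintro ⟨I, hI⟩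
  obtain ⟨B, hB, hIB⟩ := main I hI
  refine ⟨⟨B, hB⟩, ?_⟩
  rw [isthmusGraph, SimpleGraph.fromRel_adj]
  exact ⟨by simp, Or.inl hIB⟩
end

section
/- Let (G_A, G_M) be an ordered pair of simple graphs, {s,t} an edge of G_M, and f an arrangement of (G_A, G_M) such that |f⁻¹({s,t})| ≥ 2 and G_A[f⁻¹({s,t})] is connected. Then f is t-equivalent, in the sense of AAP transfers, to the arrangement g given by g(x) = t if f(x) ∈ {s,t} and g(x) = f(x) otherwise. -/
/-- An arrangement of agents (vertices of `GA`) into countries (vertices of `GM`):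
every nonempty preimage induces a connected subgraph of `GA`. -/
def IsArrangement {A M : Type*} (GA : SimpleGraph A) (f : A → M) : Prop :=
  ∀ c : M, (f ⁻¹' {c}).Nonempty → (GA.induce (f ⁻¹' {c})).Connected

/-- An AAP transfer: a set `U` of agents of country `s` is moved along an edge
`st` of `GM` to country `t`; each of `GA[U]`, `GA[f⁻¹(s) \ U]`, `GA[f⁻¹(t) ∪ U]`
is connected or empty, and `f⁻¹({s,t}) \ U ≠ ∅`. -/
def Transfer {A M : Type*} (GA : SimpleGraph A) (GM : SimpleGraph M)
    (f g : A → M) : Prop :=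
  ∃ (s t : M) (U : Set A), GM.Adj s t ∧ U ⊆ f ⁻¹' {s} ∧
    (U = ∅ ∨ (GA.induce U).Connected) ∧
    (f ⁻¹' {s} \ U = ∅ ∨ (GA.induce (f ⁻¹' {s} \ U)).Connected) ∧
    (f ⁻¹' {t} ∪ U = ∅ ∨ (GA.induce (f ⁻¹' {t} ∪ U)).Connected) ∧
    (f ⁻¹' {s, t} \ U).Nonempty ∧
    (∀ x ∈ U, g x = t) ∧ (∀ x, x ∉ U → g x = f x)

/-- t-equivalence: related by a finite sequence of transfers. -/
def TEquiv {A M : Type*} (GA : SimpleGraph A) (GM : SimpleGraph M)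
    (f g : A → M) : Prop :=
  Relation.ReflTransGen (Transfer GA GM) f g

/-- A SUBNET MERGER along an edge `st` of `GM`: all agents of `s` are merged into
country `t`, where `f⁻¹(s) ≠ ∅`, `|f⁻¹({s,t})| ≥ 2` and `GA[f⁻¹({s,t})]` is
connected. -/
def SubnetMerger {A M : Type*} (GA : SimpleGraph A) (GM : SimpleGraph M)
    (f g : A → M) : Prop :=
  ∃ s t : M, GM.Adj s t ∧ (f ⁻¹' {s}).Nonempty ∧
    2 ≤ (f ⁻¹' ({s, t} : Set M)).ncard ∧
    (GA.induce (f ⁻¹' ({s, t} : Set M))).Connected ∧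
    (∀ x, f x ∈ ({s, t} : Set M) → g x = t) ∧
    (∀ x, f x ∉ ({s, t} : Set M) → g x = f x)

/-- The number of pebbles of the configuration associated with an arrangement:
the number of countries holding at least two agents. -/
noncomputable def pebCount {A M : Type*} (f : A → M) : ℕ :=
  {c : M | 2 ≤ (f ⁻¹' {c}).ncard}.ncard

/-- `g` is an `f`-irreducible arrangement: it is t-equivalent to `f` and its
associated configuration has the minimum possible number of pebbles. -/
def IsIrreducibleFor {A M : Type*} (GA : SimpleGraph A) (GM : SimpleGraph M)
    (f g : A → M) : Prop :=
  TEquiv GA GM f g ∧ ∀ h : A → M, TEquiv GA GM f h → pebCount g ≤ pebCount h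

lemma induce_singleton_connected {A : Type*} (GA : SimpleGraph A) (v : A) :
    (GA.induce ({v} : Set A)).Connected := by
  rw [SimpleGraph.induce_singleton_eq_top]
  haveI : Nonempty ({v} : Set A) := ⟨⟨v, rfl⟩⟩
  exact SimpleGraph.connected_top

/-- In a finite connected induced subgraph on at least two vertices there exists
a non-cut vertex. -/
lemma exists_noncut {A : Type*} [Finite A] (G : SimpleGraph A) (S : Set A)
    (hconn : (G.induce S).Connected) (h2 : 1 < S.ncard) :
    ∃ v ∈ S, (G.induce (S \ {v})).Connected := by
  classical
  obtain ⟨u⟩ := hconn.nonempty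
  haveI : Finite ↥S := Subtype.finite
  haveI : Nonempty ↥S := ⟨u⟩
  obtain ⟨v, hv⟩ := Finite.exists_max ((G.induce S).dist u)
  -- v ≠ u since some vertex is at positive distance from u
  obtain ⟨w0, hw0S, hw0⟩ := Set.exists_ne_of_one_lt_ncard h2 ↑u
  have hvu : v ≠ u := by
    intro h
    have hne : u ≠ (⟨w0, hw0S⟩ : ↥S) := fun hh => hw0 (congrArg Subtype.val hh).symm
    have hpos : 0 < (G.induce S).dist u ⟨w0, hw0S⟩ := hconn.pos_dist_of_ne hne
    have := hv ⟨w0, hw0S⟩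
    rw [h, SimpleGraph.dist_self] at this
    omega
  -- every other vertex is reachable from u avoiding v
  have key : ∀ w : ↥S, w ≠ v → ∃ p : (G.induce S).Walk u w, v ∉ p.support := by
    intro w hw
    obtain ⟨p, hp⟩ := ((hconn u w) : (G.induce S).Reachable u w).exists_walk_length_eq_dist
    refine ⟨p, fun hmem => ?_⟩
    have h1 : (G.induce S).dist u v ≤ (p.takeUntil v hmem).length :=
      SimpleGraph.dist_le _
    have hd0 : (p.dropUntil v hmem).length ≠ 0 := fun h0 =>
      hw.symm (SimpleGraph.Walk.eq_of_length_eq_zero h0)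
    have h3 : (p.takeUntil v hmem).length + (p.dropUntil v hmem).length = p.length := by
      rw [← SimpleGraph.Walk.length_append, SimpleGraph.Walk.take_spec]
    have h4 : (G.induce S).dist u w ≤ (G.induce S).dist u v := hv w
    omega
  refine ⟨↑v, v.2, ?_⟩
  have huvne : (u : A) ≠ ↑v := fun h => hvu (Subtype.ext h.symm)
  have hu' : (u : A) ∈ S \ {↑v} := ⟨u.2, huvne⟩
  apply SimpleGraph.induce_connected_of_patches (u : A) hu'
  intro x hx
  have hxS : x ∈ S := hx.1
  have hxv : (⟨x, hxS⟩ : ↥S) ≠ v := fun h => hx.2 (show x ∈ ({↑v} : Set A) from h ▸ rfl)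
  obtain ⟨p, hpv⟩ := key ⟨x, hxS⟩ hxv
  let p' : G.Walk (u : A) x := p.map (SimpleGraph.Embedding.induce S).toHom
  refine ⟨{y | y ∈ p'.support}, ?_, p'.start_mem_support, p'.end_mem_support, ?_⟩
  · intro y hy
    replace hy : y ∈ (p.map (SimpleGraph.Embedding.induce S).toHom).support := hy
    simp only [Set.mem_setOf_eq, p', SimpleGraph.Walk.support_map, List.mem_map] at hy
    obtain ⟨z, hz, rfl⟩ := hy
    refine ⟨z.2, fun h => hpv ?_⟩
    have : z = v := Subtype.ext h
    rwa [← this]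
  · exact (p'.connected_induce_support).preconnected ⟨_, p'.start_mem_support⟩
      ⟨_, p'.end_mem_support⟩

/-- Lemma 4: if `|f⁻¹({s,t})| ≥ 2` and `GA[f⁻¹({s,t})]` is connected, then `f` is
t-equivalent to the arrangement sending everything of `s` and `t` to `t`. -/
theorem merger_tEquiv {A M : Type*} [Fintype A] [Fintype M]
    (GA : SimpleGraph A) (GM : SimpleGraph M)
    (f g : A → M) (hf : IsArrangement GA f)
    (s t : M) (hst : GM.Adj s t)
    (h2 : 2 ≤ (f ⁻¹' ({s, t} : Set M)).ncard)
    (hconn : (GA.induce (f ⁻¹' ({s, t} : Set M))).Connected)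
    (hg1 : ∀ x, f x ∈ ({s, t} : Set M) → g x = t)
    (hg2 : ∀ x, f x ∉ ({s, t} : Set M) → g x = f x) :
    TEquiv GA GM f g := by
  classical
  have hts : t ≠ s := hst.ne'
  have hSu : f ⁻¹' {t} ∪ f ⁻¹' {s} = f ⁻¹' ({s, t} : Set M) := by
    ext x; simp [or_comm]
  by_cases hS : (f ⁻¹' {s}).Nonempty
  · by_cases hT : (f ⁻¹' {t}).Nonempty
    · -- single transfer of all of f⁻¹(s)
      refine Relation.ReflTransGen.single ⟨s, t, f ⁻¹' {s}, hst, subset_rfl,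
        Or.inr (hf s hS), Or.inl (Set.diff_self), Or.inr (by rw [hSu]; exact hconn),
        ?_, ?_, ?_⟩
      · obtain ⟨x, hx⟩ := hT
        exact ⟨x, ⟨Or.inr hx, fun h => hts (hx.symm.trans h)⟩⟩
      · intro x hx; exact hg1 x (Or.inl hx)
      · intro x hx
        by_cases hxt : f x = t
        · rw [hg1 x (Or.inr hxt), hxt]
        · exact hg2 x (fun h => h.elim hx hxt)
    · -- f⁻¹(t) = ∅ : two transfers
      have hTe : f ⁻¹' {t} = ∅ := Set.not_nonempty_iff_eq_empty.mp hT
      have hSeq : f ⁻¹' {s} = f ⁻¹' ({s, t} : Set M) := by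
        ext x
        constructor
        · exact fun h => Or.inl h
        · rintro (h | h)
          · exact h
          · exact absurd (show x ∈ f ⁻¹' {t} from h) (by rw [hTe]; exact id)
      have hconn' : (GA.induce (f ⁻¹' {s})).Connected := by rw [hSeq]; exact hconn
      have h2' : 1 < (f ⁻¹' {s}).ncard := by rw [hSeq]; omega
      obtain ⟨v, hvS, hvconn⟩ := exists_noncut GA _ hconn' h2'
      set U₁ : Set A := f ⁻¹' {s} \ {v} with hU₁
      have hU₁ne : U₁.Nonempty := by
        obtain ⟨w, hwS, hwv⟩ := Set.exists_ne_of_one_lt_ncard h2' v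
        exact ⟨w, hwS, hwv⟩
      have hdd : f ⁻¹' {s} \ U₁ = {v} :=
        Set.diff_diff_cancel_left (Set.singleton_subset_iff.mpr hvS)
      set f₁ : A → M := fun x => if x ∈ U₁ then t else f x with hf₁
      have hf₁on : ∀ x ∈ U₁, f₁ x = t := fun x hx => if_pos hx
      have hf₁off : ∀ x, x ∉ U₁ → f₁ x = f x := fun x hx => if_neg hx
      have hf₁s : f₁ ⁻¹' {s} = {v} := by
        ext x
        by_cases hx : x ∈ U₁
        · simp only [Set.mem_preimage, Set.mem_singleton_iff, hf₁on x hx]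
          exact ⟨fun h => absurd h hts, fun h => absurd (h ▸ hx).2 (by simp)⟩
        · simp only [Set.mem_preimage, Set.mem_singleton_iff, hf₁off x hx]
          constructor
          · intro h
            by_contra hxv
            exact hx ⟨h, hxv⟩
          · rintro rfl; exact hvS
      have hf₁t : f₁ ⁻¹' {t} = U₁ := by
        ext x
        by_cases hx : x ∈ U₁
        · simp [Set.mem_preimage, hf₁on x hx, hx]
        · simp only [Set.mem_preimage, Set.mem_singleton_iff, hf₁off x hx]
          constructor
          · intro h
            exact absurd (show x ∈ f ⁻¹' {t} from h) (by rw [hTe]; exact id)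
          · intro h; exact absurd h hx
      have hf₁st : f₁ ⁻¹' ({s, t} : Set M) = f ⁻¹' {s} := by
        have : f₁ ⁻¹' ({s, t} : Set M) = f₁ ⁻¹' {t} ∪ f₁ ⁻¹' {s} := by
          ext x; simp [or_comm]
        rw [this, hf₁s, hf₁t, hU₁, Set.union_comm, Set.singleton_union,
          Set.insert_diff_singleton, Set.insert_eq_self.mpr hvS]
      have step1 : Transfer GA GM f f₁ := by
        refine ⟨s, t, U₁, hst, Set.diff_subset, Or.inr hvconn,
          Or.inr (by rw [hdd]; exact induce_singleton_connected GA v),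
          Or.inr (by rw [hTe, Set.empty_union]; exact hvconn), ?_, hf₁on, hf₁off⟩
        rw [← hSeq, hdd]
        exact ⟨v, rfl⟩
      have step2 : Transfer GA GM f₁ g := by
        refine ⟨s, t, {v}, hst, by rw [hf₁s], Or.inr (induce_singleton_connected GA v),
          Or.inl (by rw [hf₁s, Set.diff_self]), ?_, ?_, ?_, ?_⟩
        · refine Or.inr ?_
          rw [hf₁t, hU₁, Set.diff_union_self, Set.union_eq_self_of_subset_right
            (Set.singleton_subset_iff.mpr hvS)]
          exact hconn'
        · rw [hf₁st, ← hU₁]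
          exact hU₁ne
        · rintro x rfl
          exact hg1 x (Or.inl hvS)
        · intro x hxv
          by_cases hx : x ∈ U₁
          · rw [hf₁on x hx, hg1 x (Or.inl hx.1)]
          · rw [hf₁off x hx]
            refine hg2 x ?_
            rintro (h | h)
            · exact hx ⟨h, fun hv' => hxv (by rw [hv']; rfl)⟩
            · exact absurd (show x ∈ f ⁻¹' {t} from h) (by rw [hTe]; exact id)
      exact Relation.ReflTransGen.head step1 (Relation.ReflTransGen.single step2)
  · -- f⁻¹(s) = ∅ : g = f
    have hSe : f ⁻¹' {s} = ∅ := Set.not_nonempty_iff_eq_empty.mp hS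
    have : g = f := by
      funext x
      by_cases h : f x ∈ ({s, t} : Set M)
      · have hxt : f x = t := by
          rcases h with h | h
          · exact absurd (show x ∈ f ⁻¹' {s} from h) (by rw [hSe]; exact id)
          · exact h
        rw [hg1 x h, hxt]
      · exact hg2 x h
    rw [this]
    exact Relation.ReflTransGen.refl
end

section
/- The Hamiltonian circuit problem restricted to simple undirected connected graphs H whose complement is also connected is NP-complete. In particular, for any graph G with at least 3 vertices and any vertex v of G, the graph H obtained by adding new vertices a, b, c with edges {v,a}, {a,b}, {b,c} and edges {c,x} for every neighbor x of v in G, satisfies: H has a Hamiltonian circuit if and only if G has a Hamiltonian circuit, and the complement of H is connected. -/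
attribute [-instance] Sum.instBEq

/-- The graph `H` of the reduction: `G` together with three new vertices `a,b,c`
(coded `Sum.inr 0`, `Sum.inr 1`, `Sum.inr 2`) and edges `{v,a}`, `{a,b}`, `{b,c}`
and `{c,x}` for every neighbour `x` of `v` in `G`. -/
def extGraph {V : Type*} (G : SimpleGraph V) (v : V) : SimpleGraph (V ⊕ Fin 3) :=
  SimpleGraph.fromRel (fun u w =>
    match u, w with
    | Sum.inl x, Sum.inl y => G.Adj x y
    | Sum.inl x, Sum.inr i => (i = 0 ∧ x = v) ∨ (i = 2 ∧ G.Adj v x)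
    | Sum.inr i, Sum.inl x => (i = 0 ∧ x = v) ∨ (i = 2 ∧ G.Adj v x)
    | Sum.inr i, Sum.inr j => (i = 0 ∧ j = 1) ∨ (i = 1 ∧ j = 2))

section
variable {V : Type*} (G : SimpleGraph V) (v : V)

lemma adj_inl_inl {x y : V} : (extGraph G v).Adj (Sum.inl x) (Sum.inl y) ↔ G.Adj x y := by
  simp only [extGraph, SimpleGraph.fromRel_adj]
  constructor
  · rintro ⟨-, h | h⟩
    · exact h
    · exact h.symm
  · intro h
    exact ⟨by simp [h.ne], Or.inl h⟩

lemma adj_a {z : V ⊕ Fin 3} : (extGraph G v).Adj (Sum.inr 0) z ↔ z = Sum.inl v ∨ z = Sum.inr 1 := by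
  obtain x | i := z
  · simp only [extGraph, SimpleGraph.fromRel_adj]
    constructor
    · rintro ⟨-, (⟨-, rfl⟩ | ⟨h, -⟩) | (⟨-, rfl⟩ | ⟨h, -⟩)⟩ <;> simp_all
    · rintro (h | h) <;> simp_all
  · simp only [extGraph, SimpleGraph.fromRel_adj]
    constructor
    · rintro ⟨hne, (⟨-, rfl⟩ | ⟨h, -⟩) | (⟨h, -⟩ | ⟨h, h2⟩)⟩ <;> simp_all <;> omega
    · rintro (h | h) <;> simp_all

lemma adj_b {z : V ⊕ Fin 3} : (extGraph G v).Adj (Sum.inr 1) z ↔ z = Sum.inr 0 ∨ z = Sum.inr 2 := by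
  obtain x | i := z
  · simp only [extGraph, SimpleGraph.fromRel_adj]
    constructor
    · rintro ⟨-, (⟨h, -⟩ | ⟨h, -⟩) | (⟨h, -⟩ | ⟨h, -⟩)⟩ <;> simp_all <;> omega
    · rintro (h | h) <;> simp_all
  · simp only [extGraph, SimpleGraph.fromRel_adj]
    constructor
    · rintro ⟨hne, (⟨h, h'⟩ | ⟨h, h'⟩) | (⟨h, h'⟩ | ⟨h, h'⟩)⟩ <;> simp_all <;> omega
    · rintro (h | h) <;> (obtain rfl := Sum.inr_injective h) <;> exact ⟨by simp [Fin.ext_iff], by simp⟩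

lemma adj_c {z : V ⊕ Fin 3} : (extGraph G v).Adj (Sum.inr 2) z ↔
    z = Sum.inr 1 ∨ ∃ y, z = Sum.inl y ∧ G.Adj v y := by
  obtain x | i := z
  · simp only [extGraph, SimpleGraph.fromRel_adj]
    constructor
    · rintro ⟨-, (⟨h, -⟩ | ⟨-, h⟩) | (⟨h, -⟩ | ⟨-, h⟩)⟩ <;> simp_all <;> omega
    · rintro (h | ⟨y, hy, hadj⟩)
      · simp_all
      · cases hy; exact ⟨by simp, Or.inl (Or.inr ⟨trivial, hadj⟩)⟩
        
  · simp only [extGraph, SimpleGraph.fromRel_adj]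
    constructor
    · rintro ⟨hne, (⟨h, h'⟩ | ⟨h, h'⟩) | (⟨h, h'⟩ | ⟨h, h'⟩)⟩ <;> simp_all <;> omega
    · rintro (h | ⟨y, hy, -⟩)
      · obtain rfl := Sum.inr_injective h
        exact ⟨by simp [Fin.ext_iff], Or.inr (Or.inr ⟨rfl, trivial⟩)⟩
      · cases hy

end

open SimpleGraph

lemma count_tail_eq {α : Type*} [DecidableEq α] {G : SimpleGraph α} {u : α} (p : G.Walk u u)
    (a : α) : p.support.tail.count a + (if u = a then 1 else 0) = p.support.count a := by
  conv_rhs => rw [p.support_eq_cons]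
  simp only [List.count_cons, beq_iff_eq]

lemma count_tail_reverse {α : Type*} [DecidableEq α] {G : SimpleGraph α} {u : α} (p : G.Walk u u)
    (a : α) : p.reverse.support.tail.count a = p.support.tail.count a := by
  have h1 := count_tail_eq p a
  have h2 := count_tail_eq p.reverse a
  rw [Walk.support_reverse, List.count_reverse] at h2
  rw [Walk.support_reverse]
  split_ifs at h1 h2 <;> omega

lemma ham_rotate {α : Type*} [DecidableEq α] {G : SimpleGraph α} {u x : α} {p : G.Walk u u}
    (hp : p.IsHamiltonianCycle) (hx : x ∈ p.support) : (p.rotate x hx).IsHamiltonianCycle := by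
  rw [Walk.isHamiltonianCycle_iff_isCycle_and_support_count_tail_eq_one] at *
  exact ⟨hp.1.rotate hx, fun a => ((p.support_rotate x hx).perm.count_eq a).trans (hp.2 a)⟩

lemma ham_reverse {α : Type*} [DecidableEq α] {G : SimpleGraph α} {u : α} {p : G.Walk u u}
    (hp : p.IsHamiltonianCycle) : p.reverse.IsHamiltonianCycle := by
  rw [Walk.isHamiltonianCycle_iff_isCycle_and_support_count_tail_eq_one] at *
  refine ⟨?_, fun a => (count_tail_reverse p a).trans (hp.2 a)⟩
  rw [Walk.isCycle_def] at *
  refine ⟨hp.1.1.reverse _, fun h => hp.1.2.1 ?_, ?_⟩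
  · have := congrArg Walk.reverse h
    rwa [Walk.reverse_reverse] at this
  · rw [List.nodup_iff_count_le_one]
    intro a
    rw [count_tail_reverse]
    exact List.nodup_iff_count_le_one.1 hp.1.2.2 a

lemma length_eq_one_of_mem_edges {α : Type*} {G : SimpleGraph α} {u x : α} (p : G.Walk u x)
    (hp : p.IsPath) (he : s(u, x) ∈ p.edges) : p.length = 1 := by
  cases p with
  | nil => simp at he
  | @cons _ y _ h q =>
    rw [Walk.edges_cons, List.mem_cons] at he
    rw [Walk.cons_isPath_iff] at hp
    rcases he with he | he
    · rcases Sym2.eq_iff.1 he with ⟨-, rfl⟩ | ⟨rfl, rfl⟩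
      · cases q with
        | nil => simp
        | cons h' q' =>
          exfalso
          rw [Walk.cons_isPath_iff] at hp
          exact hp.1.2 q'.end_mem_support
      · exact absurd rfl h.ne
    · exact absurd (q.fst_mem_support_of_mem_edges he) hp.2

/-- A graph has a Hamiltonian circuit. -/
def HasHamiltonianCircuit {W : Type*} [DecidableEq W] (H : SimpleGraph W) : Prop :=
  ∃ (u : W) (w : H.Walk u u), w.IsHamiltonianCycle

section
variable {V : Type*} [DecidableEq V] {G : SimpleGraph V} {v : V}

@[reducible] def ι (G : SimpleGraph V) (v : V) : G →g extGraph G v :=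
  ⟨Sum.inl, fun h => (adj_inl_inl G v).2 h⟩

lemma inl_sym2_ne {i : Fin 3} {z : V ⊕ Fin 3} (e : Sym2 V) :
    Sym2.map Sum.inl e ≠ s(Sum.inr i, z) := by
  induction e using Sym2.ind with
  | _ x y => simp [Sym2.eq_iff]

lemma extGraph_ham_of_ham (h : HasHamiltonianCircuit G) :
    HasHamiltonianCircuit (extGraph G v) := by
  obtain ⟨u, p, hp⟩ := h
  have hv : v ∈ p.support := hp.mem_support v
  have hp' : (p.rotate v hv).IsHamiltonianCycle := ham_rotate hp hv
  obtain ⟨k, h0, r, heq⟩ := SimpleGraph.Walk.not_nil_iff.1 hp'.isCycle.not_nil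
  rw [heq] at hp'
  rw [Walk.isHamiltonianCycle_iff_isCycle_and_support_count_tail_eq_one] at hp'
  have hr_count : ∀ x, r.support.count x = 1 := by
    intro x
    have := hp'.2 x
    rwa [Walk.support_cons, List.tail_cons] at this
  have hr_nodup : r.support.Nodup :=
    List.nodup_iff_count_le_one.2 fun x => le_of_eq (hr_count x)
  have hr_mem : ∀ x : V, x ∈ r.support := fun x =>
    List.count_pos_iff.1 (by rw [hr_count x]; norm_num)
  have ha_b : (extGraph G v).Adj (Sum.inr 0) (Sum.inr 1) := (adj_a G v).2 (Or.inr rfl)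
  have hb_c : (extGraph G v).Adj (Sum.inr 1) (Sum.inr 2) := (adj_b G v).2 (Or.inr rfl)
  have hc_k : (extGraph G v).Adj (Sum.inr 2) (Sum.inl k) := (adj_c G v).2 (Or.inr ⟨k, rfl, h0⟩)
  have hv_a : (extGraph G v).Adj (Sum.inl v) (Sum.inr 0) := ((adj_a G v).2 (Or.inl rfl)).symm
  refine ⟨Sum.inr 0, Walk.cons ha_b (Walk.cons hb_c (Walk.cons hc_k
    ((r.map (ι G v)).concat hv_a))), ?_⟩
  have hS : ((r.map (ι G v)).concat hv_a).support
      = r.support.map Sum.inl ++ [Sum.inr 0] := by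
    rw [Walk.support_concat, Walk.support_map]
    rfl
  have hE : ((r.map (ι G v)).concat hv_a).edges
      = r.edges.map (Sym2.map Sum.inl) ++ [s(Sum.inl v, Sum.inr 0)] := by
    rw [Walk.edges_concat, Walk.edges_map, List.concat_eq_append]
    rfl
  have hNodup : (Sum.inr 1 :: Sum.inr 2 ::
      (r.support.map Sum.inl ++ [Sum.inr 0]) : List (V ⊕ Fin 3)).Nodup := by
    refine List.Nodup.cons (by simp) (List.Nodup.cons (by simp) ?_)
    rw [List.nodup_append]
    exact ⟨hr_nodup.map Sum.inl_injective, List.nodup_singleton _,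
      by simp [List.disjoint_left]⟩
  rw [Walk.isHamiltonianCycle_iff_isCycle_and_support_count_tail_eq_one]
  constructor
  · rw [Walk.cons_isCycle_iff]
    constructor
    · apply SimpleGraph.Walk.IsPath.mk'
      rw [Walk.support_cons, Walk.support_cons, hS]
      exact hNodup
    · rw [Walk.edges_cons, Walk.edges_cons, hE]
      simp only [List.mem_cons, List.mem_append, List.mem_map, List.mem_singleton]
      push_neg
      refine ⟨by simp [Sym2.eq_iff], by simp [Sym2.eq_iff], fun e he => inl_sym2_ne e,
        by simp [Sym2.eq_iff]⟩
  · intro z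
    rw [Walk.support_cons, Walk.support_cons, Walk.support_cons, List.tail_cons, hS]
    refine List.count_eq_one_of_mem hNodup ?_
    obtain x | i := z
    · simp [hr_mem x]
    · fin_cases i <;> simp

lemma lift_walk : ∀ {z w : V ⊕ Fin 3} (q : (extGraph G v).Walk z w) {x y : V}
    (h1 : z = Sum.inl x) (h2 : w = Sum.inl y),
    (∀ t ∈ q.support, ∃ s, t = Sum.inl s) →
    ∃ p : G.Walk x y, q.copy h1 h2 = p.map (ι G v) := by
  intro z w q
  induction q with
  | nil =>
    rintro x y rfl h2 _
    obtain rfl : x = y := Sum.inl_injective h2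
    exact ⟨Walk.nil, by rw [Walk.copy_rfl_rfl]; rfl⟩
  | @cons _ m _ h q ih =>
    rintro x y rfl rfl hsup
    obtain ⟨t, rfl⟩ := hsup m
      (by rw [Walk.support_cons]; exact List.mem_cons_of_mem _ q.start_mem_support)
    obtain ⟨p, hp⟩ := ih rfl rfl
      (fun s hs => hsup s (by rw [Walk.support_cons]; exact List.mem_cons_of_mem _ hs))
    rw [Walk.copy_rfl_rfl] at hp
    refine ⟨Walk.cons ((adj_inl_inl G v).1 h) p, ?_⟩
    rw [Walk.copy_rfl_rfl, hp, Walk.map_cons]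

lemma ham_of_key [Fintype V] (hcard : 3 ≤ Fintype.card V)
    (q : (extGraph G v).Walk (Sum.inr 0) (Sum.inr 1))
    (hadj : (extGraph G v).Adj (Sum.inr 1) (Sum.inr 0))
    (hcyc : (Walk.cons hadj q).IsHamiltonianCycle) :
    HasHamiltonianCircuit G := by
  have h3len := hcyc.isCycle.three_le_length
  rw [Walk.isHamiltonianCycle_iff_isCycle_and_support_count_tail_eq_one] at hcyc
  have hcount : ∀ z, q.support.count z = 1 := by
    intro z
    have := hcyc.2 z
    rwa [Walk.support_cons, List.tail_cons] at this
  -- decompose q = cons h2 q2 with second vertex inl v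
  obtain ⟨z1, h2, q2, rfl⟩ := Walk.not_nil_iff.1
    (Walk.not_nil_of_ne (p := q) (by simp [Fin.ext_iff]))
  rcases (adj_a G v).1 h2 with rfl | rfl
  swap
  · -- z1 = inr 1 : contradiction
    exfalso
    cases q2 with
    | nil => simp [Walk.length_cons] at h3len
    | @cons _ m _ h5 q5 =>
      have h1 : ((Sum.inr 1 : V ⊕ Fin 3) ∈ q5.support) := q5.end_mem_support
      have := hcount (Sum.inr 1)
      rw [Walk.support_cons, Walk.support_cons, List.count_cons, List.count_cons] at this
      simp at this
      have := List.count_pos_iff.2 h1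
      omega
  -- now q2 : Walk (inl v) (inr 1)
  have hq2sup : ∀ z, List.count z q2.support + (if Sum.inr 0 = z then 1 else 0) = 1 := by
    intro z
    have := hcount z
    rw [Walk.support_cons, List.count_cons] at this
    simpa only [beq_iff_eq] using this
  -- decompose from the back : q2.reverse = cons h3 q3
  obtain ⟨y2, h3, q3, heq3⟩ := Walk.not_nil_iff.1
    (Walk.not_nil_of_ne (p := q2.reverse) (by simp))
  have hy2mem : y2 ∈ q2.support := by
    have : y2 ∈ q2.reverse.support := by
      rw [heq3, Walk.support_cons]
      exact List.mem_cons_of_mem _ q3.start_mem_support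
    rwa [Walk.support_reverse, List.mem_reverse] at this
  rcases (adj_b G v).1 h3 with rfl | rfl
  · -- y2 = inr 0 impossible
    exfalso
    have h0 := hq2sup (Sum.inr 0)
    simp at h0
    have := List.count_pos_iff.2 hy2mem
    omega
  -- q3 : Walk (inr 2) (inl v)
  have hrevsup : q2.support.reverse = Sum.inr 1 :: q3.support := by
    rw [← Walk.support_reverse, heq3, Walk.support_cons]
  -- decompose q3 = cons h4 q4
  obtain ⟨z2, h4, q4, heq4⟩ := Walk.not_nil_iff.1 (Walk.not_nil_of_ne (p := q3) (by simp))
  rcases (adj_c G v).1 h4 with rfl | ⟨w, rfl, hvw⟩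
  · -- z2 = inr 1 impossible
    exfalso
    have hz2 : (Sum.inr 1 : V ⊕ Fin 3) ∈ q3.support := by
      rw [heq4, Walk.support_cons]
      exact List.mem_cons_of_mem _ q4.start_mem_support
    have h1 := hq2sup (Sum.inr 1)
    simp at h1
    have h2' : List.count (Sum.inr 1 : V ⊕ Fin 3) q2.support
        = List.count (Sum.inr 1) (Sum.inr 1 :: q3.support) := by
      rw [← hrevsup, List.count_reverse]
    rw [List.count_cons_self] at h2'
    have := List.count_pos_iff.2 hz2
    omega
  -- q4 : Walk (inl w) (inl v), G.Adj v w
  have hq3sup : q2.support.reverse = Sum.inr 1 :: Sum.inr 2 :: q4.support := by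
    rw [hrevsup, heq4, Walk.support_cons]
  have hq4cnt : ∀ z : V ⊕ Fin 3, List.count z q2.support
      = (List.count z q4.support + (if (Sum.inr 2 : V ⊕ Fin 3) == z then 1 else 0))
        + (if (Sum.inr 1 : V ⊕ Fin 3) == z then 1 else 0) := by
    intro z
    rw [← List.count_reverse (l := q2.support), hq3sup, List.count_cons, List.count_cons]
  have hq4_0 : List.count (Sum.inr 0 : V ⊕ Fin 3) q4.support = 0 := by
    have h1 := hq2sup (Sum.inr 0)
    rw [hq4cnt] at h1
    simp at h1
    omega
  have hq4_1 : List.count (Sum.inr 1 : V ⊕ Fin 3) q4.support = 0 := by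
    have h1 := hq2sup (Sum.inr 1)
    rw [hq4cnt] at h1
    simp at h1
    omega
  have hq4_2 : List.count (Sum.inr 2 : V ⊕ Fin 3) q4.support = 0 := by
    have h1 := hq2sup (Sum.inr 2)
    rw [hq4cnt] at h1
    simp at h1
    omega
  have hq4_l : ∀ x : V, List.count (Sum.inl x : V ⊕ Fin 3) q4.support = 1 := by
    intro x
    have h1 := hq2sup (Sum.inl x)
    rw [hq4cnt] at h1
    simp at h1
    omega
  have hq4inl : ∀ t ∈ q4.support, ∃ s, t = Sum.inl s := by
    rintro (x | i) ht
    · exact ⟨x, rfl⟩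
    · exfalso
      have hpos := List.count_pos_iff.2 ht
      have h012 : i = 0 ∨ i = 1 ∨ i = 2 := by
        fin_cases i
        · exact Or.inl rfl
        · exact Or.inr (Or.inl rfl)
        · exact Or.inr (Or.inr rfl)
      rcases h012 with rfl | rfl | rfl <;> omega
  obtain ⟨p, hp⟩ := lift_walk q4 rfl rfl hq4inl
  rw [Walk.copy_rfl_rfl] at hp
  subst hp
  -- p : G.Walk w v
  have hpsup : (p.map (ι G v)).support = p.support.map Sum.inl := by
    rw [Walk.support_map]; rfl
  have hpmem : ∀ x : V, x ∈ p.support := by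
    intro x
    have h1 := hq4_l x
    have : Sum.inl x ∈ (p.map (ι G v)).support := List.count_pos_iff.1 (Nat.one_pos.trans_eq h1.symm)
    rw [hpsup, List.mem_map] at this
    obtain ⟨s, hs, hh⟩ := this
    obtain rfl := Sum.inl_injective hh
    exact hs
  have hpnodup : p.support.Nodup := by
    have hnd : (p.support.map Sum.inl : List (V ⊕ Fin 3)).Nodup := by
      rw [← hpsup]
      refine List.nodup_iff_count_le_one.2 ?_
      rintro (x | i)
      · exact le_of_eq (hq4_l x)
      · have h012 : i = 0 ∨ i = 1 ∨ i = 2 := by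
          fin_cases i
          · exact Or.inl rfl
          · exact Or.inr (Or.inl rfl)
          · exact Or.inr (Or.inr rfl)
        rcases h012 with rfl | rfl | rfl <;>
          [exact hq4_0.trans_le zero_le_one; exact hq4_1.trans_le zero_le_one;
            exact hq4_2.trans_le zero_le_one]
    exact hnd.of_map _
  have hplen : p.length + 1 = Fintype.card V := by
    have h1 : p.support.toFinset = Finset.univ := Finset.eq_univ_iff_forall.2
      fun x => List.mem_toFinset.2 (hpmem x)
    have h2 := List.toFinset_card_of_nodup hpnodup
    rw [h1] at h2
    rw [← Walk.length_support]
    rw [Finset.card_univ] at h2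
    omega
  refine ⟨v, Walk.cons hvw p, ?_⟩
  rw [Walk.isHamiltonianCycle_iff_isCycle_and_support_count_tail_eq_one]
  refine ⟨?_, ?_⟩
  · rw [Walk.cons_isCycle_iff]
    refine ⟨Walk.IsPath.mk' hpnodup, fun hmem => ?_⟩
    have := length_eq_one_of_mem_edges p (Walk.IsPath.mk' hpnodup) (by rwa [Sym2.eq_swap])
    omega
  · intro z
    rw [Walk.support_cons, List.tail_cons]
    exact List.count_eq_one_of_mem hpnodup (hpmem z)

lemma ham_of_extGraph_ham [Fintype V] (hcard : 3 ≤ Fintype.card V)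
    (h : HasHamiltonianCircuit (extGraph G v)) : HasHamiltonianCircuit G := by
  obtain ⟨u, W, hW⟩ := h
  have hb : (Sum.inr 1 : V ⊕ Fin 3) ∈ W.support := hW.mem_support _
  have hW' := ham_rotate hW hb
  obtain ⟨x1, h1, q, heq⟩ := Walk.not_nil_iff.1 hW'.isCycle.not_nil
  rw [heq] at hW'
  rcases (adj_b G v).1 h1 with rfl | rfl
  · exact ham_of_key hcard q h1 hW'
  · -- first step goes to inr 2; use the reverse walk
    have hWrev := ham_reverse hW'
    obtain ⟨y, h1', q', heq'⟩ := Walk.not_nil_iff.1 hWrev.isCycle.not_nil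
    rw [heq'] at hWrev
    rcases (adj_b G v).1 h1' with rfl | rfl
    · exact ham_of_key hcard q' h1' hWrev
    · exfalso
      have hedges : q.edges.reverse ++ [s(Sum.inr 1, Sum.inr 2)]
          = s(Sum.inr 1, Sum.inr 2) :: q'.edges := by
        have := congrArg Walk.edges heq'
        rwa [Walk.edges_reverse, Walk.edges_cons, Walk.edges_cons, List.reverse_cons] at this
      have hqne : q.edges ≠ [] := by
        intro hnil
        have : q.length = 0 := by rw [← Walk.length_edges, hnil]; rfl
        have := Walk.Nil.eq (Walk.nil_iff_length_eq.2 this)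
        simp at this
      have hmem : s(Sum.inr 1, Sum.inr 2) ∈ q.edges := by
        rcases hrev : q.edges.reverse with _ | ⟨e, es⟩
        · exact absurd (by simpa using congrArg List.reverse hrev) hqne
        · rw [hrev] at hedges
          simp only [List.cons_append, List.cons.injEq] at hedges
          have : e ∈ q.edges.reverse := by rw [hrev]; exact List.mem_cons_self
          rw [hedges.1] at this
          rwa [List.mem_reverse] at this
      have htrail : (s(Sum.inr 1, Sum.inr 2) :: q.edges).Nodup := by
        have := hW'.isCycle.isCircuit.isTrail.edges_nodup
        rwa [Walk.edges_cons] at this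
      exact (List.nodup_cons.1 htrail).1 hmem

lemma compl_connected : ((extGraph G v)ᶜ).Connected := by
  have hb : ∀ x : V, ((extGraph G v)ᶜ).Adj (Sum.inr 1) (Sum.inl x) := by
    intro x
    rw [SimpleGraph.compl_adj]
    refine ⟨by simp, fun h => ?_⟩
    rcases (adj_b G v).1 h with h' | h' <;> simp at h'
  have hcv : ((extGraph G v)ᶜ).Adj (Sum.inl v) (Sum.inr 2) := by
    rw [SimpleGraph.compl_adj]
    refine ⟨by simp, fun h => ?_⟩
    rcases (adj_c G v).1 h.symm with h' | ⟨y, hy, hadj⟩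
    · simp at h'
    · obtain rfl := Sum.inl_injective hy
      exact G.irrefl hadj
  have hca : ((extGraph G v)ᶜ).Adj (Sum.inr 2) (Sum.inr 0) := by
    rw [SimpleGraph.compl_adj]
    refine ⟨by simp [Fin.ext_iff], fun h => ?_⟩
    rcases (adj_a G v).1 h.symm with h' | h' <;> simp [Fin.ext_iff] at h'
  have key : ∀ z, ((extGraph G v)ᶜ).Reachable (Sum.inr 1) z := by
    rintro (x | i)
    · exact (hb x).reachable
    · have h012 : i = 0 ∨ i = 1 ∨ i = 2 := by
        fin_cases i
        · exact Or.inl rfl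
        · exact Or.inr (Or.inl rfl)
        · exact Or.inr (Or.inr rfl)
      rcases h012 with rfl | rfl | rfl
      · exact (hb v).reachable.trans (hcv.reachable.trans hca.reachable)
      · exact SimpleGraph.Reachable.refl _
      · exact (hb v).reachable.trans hcv.reachable
  have : Nonempty (V ⊕ Fin 3) := ⟨Sum.inr 1⟩
  exact ⟨fun x y => (key x).symm.trans (key y)⟩

end

/-- The reduction for the restricted Hamiltonian circuit problem: `H = extGraph G v`
has a Hamiltonian circuit iff `G` does, and the complement of `H` is connected. -/
theorem restricted_hamiltonian_reduction {V : Type*} [Fintype V] [DecidableEq V]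
    (G : SimpleGraph V) (h3 : 3 ≤ Fintype.card V) (v : V) :
    (HasHamiltonianCircuit (extGraph G v) ↔ HasHamiltonianCircuit G) ∧
    (extGraph G v)ᶜ.Connected :=
  ⟨⟨fun h => ham_of_extGraph_ham h3 h, fun h => extGraph_ham_of_ham h⟩, compl_connected⟩
end

section
/- Let G be a connected graph with n vertices, P a set of m < n labeled pebbles, k = n − m ≥ 1. For any configuration f, any pebble p ∈ P, the induced subgraph G[R(p,f)] on the reachable range of p is connected, and |R(p,f)| ≥ k + 1. -/
/-- A single pebble move: pebble `p` moves from `f p` to an adjacent vertex that is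
unoccupied in `f`; all other pebbles stay in place. -/
def PebMove {V P : Type*} (G : SimpleGraph V) (f g : P ↪ V) : Prop :=
  ∃ p : P, G.Adj (f p) (g p) ∧ (∀ q : P, q ≠ p → g q = f q) ∧ ∀ q : P, f q ≠ g p

/-- Two configurations are equivalent if one can be transformed into the other by a
finite sequence of moves. -/
def PebEquiv {V P : Type*} (G : SimpleGraph V) (f g : P ↪ V) : Prop :=
  Relation.ReflTransGen (PebMove G) f g

/-- The reachable range `R(p,f)`: all vertices pebble `p` can reach by sequences of
moves starting from configuration `f`. -/
def ReachSet {V P : Type*} (G : SimpleGraph V) (f : P ↪ V) (p : P) : Set V :=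
  {v | ∃ g : P ↪ V, PebEquiv G f g ∧ g p = v}

section Aux

variable {V P : Type*}

/-- Perform a single pebble move: pebble `q` moves from `g q` to the unoccupied
adjacent vertex `h`. -/
lemma exists_move (G : SimpleGraph V) (g : P ↪ V) (q : P) (h : V)
    (hadj : G.Adj (g q) h) (hh : ∀ r, g r ≠ h) :
    ∃ g' : P ↪ V, PebMove G g g' ∧ g' q = h ∧ ∀ r, r ≠ q → g' r = g r := by
  classical
  have hinj : Function.Injective (Function.update (g : P → V) q h) := by
    intro a b hab
    by_cases ha : a = q <;> by_cases hb : b = q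
    · rw [ha, hb]
    · subst ha
      rw [Function.update_self, Function.update_of_ne hb] at hab
      exact absurd hab.symm (hh b)
    · subst hb
      rw [Function.update_self, Function.update_of_ne ha] at hab
      exact absurd hab (hh a)
    · exact g.injective (by rwa [Function.update_of_ne ha, Function.update_of_ne hb] at hab)
  refine ⟨⟨_, hinj⟩, ⟨q, ?_, ?_, ?_⟩, ?_, ?_⟩
  · simpa using hadj
  · intro r hr; simp [Function.update_of_ne hr]
  · intro r; simpa using hh r
  · simp
  · intro r hr; simp [Function.update_of_ne hr]

/-- A set of "holes" built greedily: each new hole is adjacent to the current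
connected cluster around `v`. -/
inductive GrowSet [DecidableEq V] (G : SimpleGraph V) (v : V) : Finset V → Prop
  | nil : GrowSet G v ∅
  | grow {T : Finset V} {u x : V} : GrowSet G v T → u ∉ T → u ≠ v →
      (x = v ∨ x ∈ T) → G.Adj u x → GrowSet G v (insert u T)

lemma growSet_reach [DecidableEq V] (G : SimpleGraph V) (v : V) {T : Finset V}
    (h : GrowSet G v T) :
    ∀ w, (w = v ∨ w ∈ T) →
      Relation.ReflTransGen
        (fun a b => (a = v ∨ a ∈ T) ∧ (b = v ∨ b ∈ T) ∧ G.Adj a b) v w := by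
  induction h with
  | nil =>
    rintro w (rfl | hw)
    · exact Relation.ReflTransGen.refl
    · simp at hw
  | @grow T u x hT huT huv hx hadj ih =>
    intro w hw
    have mono : ∀ {c}, Relation.ReflTransGen
        (fun a b => (a = v ∨ a ∈ T) ∧ (b = v ∨ b ∈ T) ∧ G.Adj a b) v c →
        Relation.ReflTransGen
        (fun a b => (a = v ∨ a ∈ insert u T) ∧ (b = v ∨ b ∈ insert u T) ∧ G.Adj a b) v c :=
      fun hrel => Relation.ReflTransGen.mono (fun a b hab =>
        ⟨hab.1.imp id Finset.mem_insert_of_mem, hab.2.1.imp id Finset.mem_insert_of_mem,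
          hab.2.2⟩) _ _ hrel
    rcases hw with rfl | hw
    · exact Relation.ReflTransGen.refl
    · rcases Finset.mem_insert.1 hw with rfl | hw
      · exact (mono (ih x hx)).tail
          ⟨hx.imp id Finset.mem_insert_of_mem, Or.inr (Finset.mem_insert_self _ _), hadj.symm⟩
      · exact mono (ih w (Or.inr hw))

/-- There is always a hole outside a small set `T`. -/
lemma exists_hole [DecidableEq V] [Fintype V] [Fintype P] (g : P ↪ V) (T : Finset V) (k : ℕ)
    (hcard : Fintype.card P + k = Fintype.card V) (hT : T.card < k) :
    ∃ h, (∀ q, g q ≠ h) ∧ h ∉ T := by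
  have h1 : (Finset.univ.image (g : P → V) ∪ T).card < Fintype.card V := by
    have h2 : (Finset.univ.image (g : P → V)).card ≤ Fintype.card P :=
      Finset.card_image_le.trans (le_of_eq Finset.card_univ)
    have h3 := Finset.card_union_le (Finset.univ.image (g : P → V)) T
    omega
  have h4 : ((Finset.univ.image (g : P → V) ∪ T)ᶜ).Nonempty := by
    rw [← Finset.card_pos, Finset.card_compl]
    omega
  obtain ⟨h, hh⟩ := h4
  rw [Finset.mem_compl] at hh
  simp only [Finset.mem_union, Finset.mem_image, Finset.mem_univ, true_and, not_or,
    not_exists] at hh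
  exact ⟨h, fun q he => hh.1 q he, hh.2⟩

/-- Transport a hole along a walk towards `v` (without moving pebble `p`, which sits
at `v`, and without disturbing the holes in `T`) until it becomes adjacent to
`{v} ∪ T`. -/
lemma transport (G : SimpleGraph V) (p : P) (T : Finset V) :
    ∀ {h v : V} (_ : G.Walk h v) (g : P ↪ V), g p = v → (∀ t ∈ T, ∀ q, g q ≠ t) →
      (∀ q, g q ≠ h) → h ∉ T →
      ∃ (g' : P ↪ V) (u : V), PebEquiv G g g' ∧ g' p = v ∧ (∀ t ∈ T, ∀ q, g' q ≠ t) ∧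
        (∀ q, g' q ≠ u) ∧ u ∉ T ∧ u ≠ v ∧ ∃ x, (x = v ∨ x ∈ T) ∧ G.Adj u x := by
  intro h v w
  induction w with
  | nil =>
    intro g hgp _ hh _
    exact absurd hgp (hh p)
  | @cons a b c hab rest ih =>
    intro g hgp hT hh hhT
    by_cases hb : b = c ∨ b ∈ T
    · have hav : a ≠ c := fun e => hh p (hgp.trans e.symm)
      exact ⟨g, a, Relation.ReflTransGen.refl, hgp, hT, hh, hhT, hav, b, hb, hab⟩
    · push_neg at hb
      by_cases hbhole : ∀ q, g q ≠ b
      · exact ih g hgp hT hbhole hb.2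
      · push_neg at hbhole
        obtain ⟨q, hq⟩ := hbhole
        obtain ⟨g1, hmv, hg1q, hg1r⟩ := exists_move G g q a (by rw [hq]; exact hab.symm) hh
        have hpq : p ≠ q := fun e => hb.1 (by rw [← hq, ← e, hgp])
        have hg1p : g1 p = c := by rw [hg1r p hpq, hgp]
        have hT1 : ∀ t ∈ T, ∀ r, g1 r ≠ t := by
          intro t ht r
          rcases eq_or_ne r q with rfl | hr
          · rw [hg1q]; exact fun e => hhT (e ▸ ht)
          · rw [hg1r r hr]; exact hT t ht r
        have hbhole1 : ∀ r, g1 r ≠ b := by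
          intro r
          rcases eq_or_ne r q with rfl | hr
          · rw [hg1q]; exact hab.ne
          · rw [hg1r r hr]; exact fun e => hr (g.injective (e.trans hq.symm))
        obtain ⟨g', u, he, h1, h2, h3, h4, h5, h6⟩ := ih g1 hg1p hT1 hbhole1 hb.2
        exact ⟨g', u, Relation.ReflTransGen.head hmv he, h1, h2, h3, h4, h5, h6⟩

/-- Gather `j` holes into a connected cluster around the pebble `p` (which never
moves from `f p`). -/
lemma gather [DecidableEq V] [Fintype V] [Fintype P] (G : SimpleGraph V) (hG : G.Connected)
    (k : ℕ) (hcard : Fintype.card P + k = Fintype.card V) (f : P ↪ V) (p : P) :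
    ∀ j, j ≤ k → ∃ (g : P ↪ V) (T : Finset V), PebEquiv G f g ∧ g p = f p ∧ T.card = j ∧
      f p ∉ T ∧ (∀ t ∈ T, ∀ q, g q ≠ t) ∧ GrowSet G (f p) T := by
  intro j
  induction j with
  | zero =>
    exact fun _ => ⟨f, ∅, Relation.ReflTransGen.refl, rfl, rfl, by simp, by simp, GrowSet.nil⟩
  | succ j ih =>
    intro hj
    obtain ⟨g, T, hequiv, hgp, hTcard, hvT, hThole, hgrow⟩ := ih (Nat.le_of_succ_le hj)
    obtain ⟨h, hhole, hhT⟩ := exists_hole g T k hcard (by omega)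
    obtain ⟨w⟩ := hG.preconnected h (f p)
    obtain ⟨g', u, he2, hg'p, hT', hu, huT, huv, x, hx, hadj⟩ :=
      transport G p T w g hgp hThole hhole hhT
    refine ⟨g', insert u T, hequiv.trans he2, hg'p, ?_, ?_, ?_, GrowSet.grow hgrow huT huv hx hadj⟩
    · rw [Finset.card_insert_of_notMem huT, hTcard]
    · simp only [Finset.mem_insert, not_or]
      exact ⟨fun e => huv e.symm, hvT⟩
    · intro t ht q
      rcases Finset.mem_insert.1 ht with rfl | ht
      · exact hu q
      · exact hT' t ht q

/-- Walk the pebble `p` through a cluster of holes. -/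
lemma step_reach (G : SimpleGraph V) (f : P ↪ V) (p : P) (v : V) (T : Finset V) :
    ∀ w, Relation.ReflTransGen
        (fun a b => (a = v ∨ a ∈ T) ∧ (b = v ∨ b ∈ T) ∧ G.Adj a b) v w →
      (∃ g : P ↪ V, PebEquiv G f g ∧ g p = v ∧
        ∀ x, (x = v ∨ x ∈ T) → x ≠ v → ∀ q, g q ≠ x) →
      ∃ g : P ↪ V, PebEquiv G f g ∧ g p = w ∧
        ∀ x, (x = v ∨ x ∈ T) → x ≠ w → ∀ q, g q ≠ x := by
  intro w hrel
  induction hrel with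
  | refl => exact id
  | @tail b c _ hbc ih =>
    intro hQ
    obtain ⟨g, he, hgp, hH⟩ := ih hQ
    obtain ⟨hbS, hcS, hadj⟩ := hbc
    have hchole : ∀ q, g q ≠ c := hH c hcS hadj.ne'
    obtain ⟨g', hmove, hg'p, hg'r⟩ := exists_move G g p c (by rw [hgp]; exact hadj) hchole
    refine ⟨g', he.tail hmove, hg'p, ?_⟩
    intro x hxS hxc q
    rcases eq_or_ne q p with rfl | hq
    · rw [hg'p]; exact hxc.symm
    · rw [hg'r q hq]
      rcases eq_or_ne x b with rfl | hxb
      · rw [← hgp]; exact fun e => hq (g.injective e)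
      · exact hH x hxS hxb q

end Aux

/-- The reachable range of a pebble induces a connected subgraph and has at least
`k+1` vertices, where `k` is the number of unoccupied vertices. -/
theorem reachSet_connected_card {V P : Type*} [Fintype V] [Fintype P]
    (G : SimpleGraph V) (hG : G.Connected) (k : ℕ) (hk : 1 ≤ k)
    (hm : 0 < Fintype.card P) (hcard : Fintype.card P + k = Fintype.card V)
    (f : P ↪ V) (p : P) :
    (G.induce (ReachSet G f p)).Connected ∧ k + 1 ≤ (ReachSet G f p).ncard := by
  classical
  have hfpR : f p ∈ ReachSet G f p := ⟨f, Relation.ReflTransGen.refl, rfl⟩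
  constructor
  · -- connectivity
    have key : ∀ g : P ↪ V, PebEquiv G f g → ∃ hg : g p ∈ ReachSet G f p,
        (G.induce (ReachSet G f p)).Reachable ⟨f p, hfpR⟩ ⟨g p, hg⟩ := by
      intro g hg
      induction hg with
      | refl => exact ⟨hfpR, SimpleGraph.Reachable.refl _⟩
      | @tail b c hfb hbc ih =>
        obtain ⟨hbR, hreach⟩ := ih
        have hcR : c p ∈ ReachSet G f p := ⟨c, hfb.tail hbc, rfl⟩
        obtain ⟨q, hadj, hfix, _⟩ := hbc
        rcases eq_or_ne q p with rfl | hq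
        · refine ⟨hcR, hreach.trans (SimpleGraph.Adj.reachable ?_)⟩
          simpa using hadj
        · refine ⟨hcR, ?_⟩
          have he : (⟨c p, hcR⟩ : ReachSet G f p) = ⟨b p, hbR⟩ :=
            Subtype.ext (hfix p hq.symm)
          rw [he]; exact hreach
    rw [SimpleGraph.connected_iff]
    refine ⟨?_, ⟨⟨f p, hfpR⟩⟩⟩
    rintro ⟨a, ha⟩ ⟨b, hb⟩
    obtain ⟨ga, hga, hga'⟩ := id ha
    obtain ⟨gb, hgb, hgb'⟩ := id hb
    obtain ⟨h1, r1⟩ := key ga hga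
    obtain ⟨h2, r2⟩ := key gb hgb
    have e1 : (⟨ga p, h1⟩ : ReachSet G f p) = ⟨a, ha⟩ := Subtype.ext hga'
    have e2 : (⟨gb p, h2⟩ : ReachSet G f p) = ⟨b, hb⟩ := Subtype.ext hgb'
    exact (e1 ▸ r1).symm.trans (e2 ▸ r2)
  · -- cardinality
    obtain ⟨g, T, hequiv, hgp, hTcard, hvT, hThole, hgrow⟩ :=
      gather G hG k hcard f p k le_rfl
    have hsub : (↑(insert (f p) T) : Set V) ⊆ ReachSet G f p := by
      intro w hw
      have hw' : w = f p ∨ w ∈ T := by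
        simpa [Finset.mem_insert] using hw
      have hrel := growSet_reach G (f p) hgrow w hw'
      have hQ0 : ∃ g0 : P ↪ V, PebEquiv G f g0 ∧ g0 p = f p ∧
          ∀ x, (x = f p ∨ x ∈ T) → x ≠ f p → ∀ q, g0 q ≠ x := by
        refine ⟨g, hequiv, hgp, ?_⟩
        rintro x (rfl | hx) hxv q
        · exact absurd rfl hxv
        · exact hThole x hx q
      obtain ⟨g', he', hg'p, _⟩ := step_reach G f p (f p) T w hrel hQ0
      exact ⟨g', he', hg'p⟩
    have hScard : (insert (f p) T).card = k + 1 := by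
      rw [Finset.card_insert_of_notMem hvT, hTcard]
    calc k + 1 = ((↑(insert (f p) T) : Set V)).ncard := by
          rw [Set.ncard_coe_finset, hScard]
      _ ≤ (ReachSet G f p).ncard := Set.ncard_le_ncard hsub (Set.toFinite _)
end
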